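/- Let 1 ≤ p_0 < p_1 ≤ ∞. Then the n-th Bernstein number of the inclusion I : ℓ^{p_0}(N) ↪ ℓ^{p_1}(N) equals n^{1/p_1 − 1/p_0}. In particular, the inclusion is finitely strictly singular. -/

import Mathlib

open MeasureTheory Set ENNReal Filter

/-- The `ℓ^p` norm of a family of extended nonnegative reals (with `p = ∞` giving the sup). -/
noncomputable def elpE {ι : Type*} (p : ℝ≥0∞) (x : ι → ℝ≥0∞) : ℝ≥0∞ :=
  if p = ∞ then ⨆ k, x k else (∑' k, x k ^ p.toReal) ^ (1 / p.toReal)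

/-- The `ℓ^p` (quasi-)norm of a real-valued family. -/
noncomputable def elp {ι : Type*} (p : ℝ≥0∞) (x : ι → ℝ) : ℝ≥0∞ :=
  elpE p fun k => (‖x k‖₊ : ℝ≥0∞)

/-- The `n`-th Bernstein number of the identity viewed as a map from the space with
(quasi-)norm `N` to the space with (quasi-)norm `M`. -/
noncomputable def bern {E : Type*} [AddCommGroup E] [Module ℝ E]
    (N M : E → ℝ≥0∞) (n : ℕ) : ℝ≥0∞ :=
  ⨆ V : {V : Submodule ℝ E // Module.finrank ℝ V = n ∧ ∀ x ∈ V, N x ≠ ∞},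
    ⨅ x : {x : E // x ∈ V.1 ∧ N x = 1}, M x.1

variable {p : ℝ≥0∞}

lemma elp_eq_of_ne_top (hp : p ≠ ∞) (x : ℕ → ℝ) :
    elp p x = (∑' k, (‖x k‖₊ : ℝ≥0∞) ^ p.toReal) ^ (1 / p.toReal) := by
  simp [elp, elpE, hp]

lemma elp_top (x : ℕ → ℝ) : elp ∞ x = ⨆ k, (‖x k‖₊ : ℝ≥0∞) := by
  simp [elp, elpE]

lemma tsum_coe_rpow_eq (q : ℝ) (hq : 0 ≤ q) {x : ℕ → ℝ}
    (h : Summable fun k => ‖x k‖ ^ q) :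
    ∑' k, (‖x k‖₊ : ℝ≥0∞) ^ q = ENNReal.ofReal (∑' k, ‖x k‖ ^ q) := by
  rw [ENNReal.ofReal_tsum_of_nonneg (fun k => Real.rpow_nonneg (norm_nonneg _) _) h]
  congr 1
  ext k
  rw [← ENNReal.ofReal_rpow_of_nonneg (norm_nonneg _) hq, ← coe_nnnorm, ENNReal.ofReal_coe_nnreal]

lemma summable_of_elp_ne_top (hp : p ≠ ∞) (hq : 0 < p.toReal) {x : ℕ → ℝ}
    (h : elp p x ≠ ∞) : Summable fun k => ‖x k‖ ^ p.toReal := by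
  rw [elp_eq_of_ne_top hp] at h
  have hT : ∑' k, (‖x k‖₊ : ℝ≥0∞) ^ p.toReal ≠ ∞ := by
    intro hc
    rw [hc, ENNReal.top_rpow_of_pos (by positivity)] at h
    exact h rfl
  have : ∑' k, (↑(‖x k‖₊ ^ p.toReal) : ℝ≥0∞) ≠ ∞ := by
    simpa [ENNReal.coe_rpow_of_nonneg _ hq.le] using hT
  have hs := ENNReal.tsum_coe_ne_top_iff_summable.mp this
  simpa [NNReal.coe_rpow, coe_nnnorm] using NNReal.summable_coe.mpr hs

lemma memℓp_of_elp_ne_top (hp : p ≠ ∞) (hq : 0 < p.toReal) {x : ℕ → ℝ}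
    (h : elp p x ≠ ∞) : Memℓp x p :=
  memℓp_gen (summable_of_elp_ne_top hp hq h)

lemma elp_eq_ofReal_norm (hp : p ≠ ∞) (hq : 0 < p.toReal)
    (f : lp (fun _ : ℕ => ℝ) p) : elp p ⇑f = ENNReal.ofReal ‖f‖ := by
  have hsum : Summable fun k => ‖(f : ∀ _ : ℕ, ℝ) k‖ ^ p.toReal :=
    (memℓp_gen_iff hq).mp (lp.memℓp f)
  rw [elp_eq_of_ne_top hp, tsum_coe_rpow_eq _ hq.le hsum, lp.norm_eq_tsum_rpow hq f,
    ENNReal.ofReal_rpow_of_nonneg (tsum_nonneg fun k => Real.rpow_nonneg (norm_nonneg _) _)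
      (by positivity)]

-- coordinate decay lemma
lemma finite_big_coords {p : ℝ≥0∞} (hq : 0 < p.toReal) (f : lp (fun _ : ℕ => ℝ) p)
    {c : ℝ} (hc : 0 < c) : {k : ℕ | c ≤ ‖(f : ∀ _ : ℕ, ℝ) k‖}.Finite := by
  have hsum : Summable fun k => ‖(f : ∀ _ : ℕ, ℝ) k‖ ^ p.toReal :=
    (memℓp_gen_iff hq).mp (lp.memℓp f)
  have h0 := hsum.tendsto_atTop_zero
  have hev : ∀ᶠ k in atTop, ‖(f : ∀ _ : ℕ, ℝ) k‖ ^ p.toReal < c ^ p.toReal :=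
    h0.eventually_lt_const (by positivity)
  obtain ⟨N, hN⟩ := eventually_atTop.mp hev
  apply Set.Finite.subset (Set.finite_Iio N)
  intro k hk
  simp only [Set.mem_setOf_eq] at hk
  by_contra hkN
  have hkN' : N ≤ k := le_of_not_gt hkN
  have := hN k hkN'
  have h2 : c ^ p.toReal ≤ ‖(f : ∀ _ : ℕ, ℝ) k‖ ^ p.toReal :=
    Real.rpow_le_rpow hc.le hk hq.le
  linarith

lemma exists_uniform_coord_bound {p : ℝ≥0∞} (hq : 0 < p.toReal)
    (f : lp (fun _ : ℕ => ℝ) p) {c : ℝ} (hc : 0 < c) :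
    ∃ c' : ℝ, c' < c ∧ 0 ≤ c' ∧ ∀ k, ‖(f : ∀ _ : ℕ, ℝ) k‖ < c → ‖(f : ∀ _ : ℕ, ℝ) k‖ ≤ c' := by
  have hF : {k : ℕ | c/2 ≤ ‖(f : ∀ _ : ℕ, ℝ) k‖}.Finite := finite_big_coords hq f (by linarith)
  classical
  set Fin := hF.toFinset with hFin
  set s := insert (c/2) ((Fin.filter (fun k => ‖(f : ∀ _ : ℕ, ℝ) k‖ < c)).image
    (fun k => ‖(f : ∀ _ : ℕ, ℝ) k‖)) with hs
  have hne : s.Nonempty := Finset.insert_nonempty _ _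
  refine ⟨s.max' hne, ?_, ?_, ?_⟩
  · apply Finset.max'_lt_iff s hne |>.mpr
    intro y hy
    rcases Finset.mem_insert.mp hy with h | h
    · subst h; linarith
    · obtain ⟨k, hk, rfl⟩ := Finset.mem_image.mp h
      exact (Finset.mem_filter.mp hk).2
  · calc (0:ℝ) ≤ c/2 := by linarith
      _ ≤ s.max' hne := Finset.le_max' s _ (Finset.mem_insert_self _ _)
  · intro k hk
    by_cases h2 : c/2 ≤ ‖(f : ∀ _ : ℕ, ℝ) k‖
    · apply Finset.le_max'
      apply Finset.mem_insert_of_mem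
      apply Finset.mem_image_of_mem
      rw [Finset.mem_filter]
      exact ⟨hF.mem_toFinset.mpr h2, hk⟩
    · push_neg at h2
      calc ‖(f : ∀ _ : ℕ, ℝ) k‖ ≤ c/2 := h2.le
        _ ≤ s.max' hne := Finset.le_max' s _ (Finset.mem_insert_self _ _)

set_option maxHeartbeats 2000000 in
lemma exists_unit_vector_small_coords (p : ℝ≥0∞) [Fact (1 ≤ p)] (hptop : p ≠ ∞)
    (n : ℕ) (hn : 1 ≤ n) (W : Submodule ℝ (lp (fun _ : ℕ => ℝ) p))
    (hW : Module.finrank ℝ W = n) :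
    ∃ f : lp (fun _ : ℕ => ℝ) p, f ∈ W ∧ ‖f‖ = 1 ∧
      ∀ k : ℕ, ‖(f : ∀ _ : ℕ, ℝ) k‖ ^ p.toReal ≤ 1 / n := by
  classical
  have hp1 : (1:ℝ≥0∞) ≤ p := Fact.out
  have hp0 : p ≠ 0 := by intro h; rw [h] at hp1; simp at hp1
  have hq : 0 < p.toReal := ENNReal.toReal_pos hp0 hptop
  set q := p.toReal with hqdef
  haveI : FiniteDimensional ℝ W := FiniteDimensional.of_finrank_pos (by rw [hW]; omega)
  -- coordinates of an element of W
  set co : ↥W → ℕ → ℝ := fun w k => (w.1 : ∀ _ : ℕ, ℝ) k with hco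
  have hconorm : ∀ (w : ↥W) (k : ℕ), ‖co w k‖ ≤ ‖w‖ := by
    intro w k
    simpa using lp.norm_apply_le_norm hp0 w.1 k
  have hbdd : ∀ w : ↥W, BddAbove (Set.range fun k => ‖co w k‖) := by
    intro w
    exact ⟨‖w‖, by rintro r ⟨k, rfl⟩; exact hconorm w k⟩
  -- the sup functional
  set G : ↥W → ℝ := fun w => ⨆ k, ‖co w k‖ with hG
  have hGle : ∀ w : ↥W, G w ≤ ‖w‖ := fun w => ciSup_le (hconorm w)
  have hleG : ∀ (w : ↥W) (k : ℕ), ‖co w k‖ ≤ G w := fun w k => le_ciSup (hbdd w) k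
  have hG0 : ∀ w : ↥W, 0 ≤ G w := fun w => le_trans (norm_nonneg _) (hleG w 0)
  have hGlip : ∀ v w : ↥W, G v ≤ G w + ‖v - w‖ := by
    intro v w
    apply ciSup_le
    intro k
    have h1 : co v k = co w k + co (v - w) k := by
      simp only [hco]
      have : ((v - w).1 : ∀ _ : ℕ, ℝ) = (v.1 : ∀ _ : ℕ, ℝ) - (w.1 : ∀ _ : ℕ, ℝ) := by
        rw [Submodule.coe_sub, lp.coeFn_sub]
      rw [this]; simp
    rw [h1]
    calc ‖co w k + co (v - w) k‖ ≤ ‖co w k‖ + ‖co (v - w) k‖ := norm_add_le _ _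
      _ ≤ G w + ‖v - w‖ := add_le_add (hleG w k) (hconorm _ k)
  have hGcont : Continuous G := by
    apply LipschitzWith.continuous (K := 1)
    apply LipschitzWith.of_dist_le_mul
    intro v w
    rw [NNReal.coe_one, one_mul, Real.dist_eq, abs_sub_le_iff, dist_eq_norm]
    constructor
    · linarith [hGlip v w]
    · have := hGlip w v
      rw [show w - v = -(v - w) by abel, norm_neg] at this
      linarith
  -- the compact sphere
  set S := Metric.sphere (0 : ↥W) 1 with hS
  have hScpt : IsCompact S := isCompact_sphere 0 1
  have hSne : S.Nonempty := by
    haveI : Nontrivial ↥W := Module.nontrivial_of_finrank_pos (R := ℝ) (by rw [hW]; omega)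
    obtain ⟨w₀, hw₀⟩ := exists_ne (0 : ↥W)
    exact ⟨‖w₀‖⁻¹ • w₀, mem_sphere_zero_iff_norm.mpr (norm_smul_inv_norm hw₀)⟩
  obtain ⟨x₁, hx₁S, hx₁min⟩ := hScpt.exists_isMinOn hSne hGcont.continuousOn
  have hx₁n : ‖x₁‖ = 1 := mem_sphere_zero_iff_norm.mp hx₁S
  set c := G x₁ with hc
  have hmin : ∀ w : ↥W, ‖w‖ = 1 → c ≤ G w := by
    intro w hw
    exact hx₁min (mem_sphere_zero_iff_norm.mpr hw)
  have hcpos : 0 < c := by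
    rcases lt_or_ge 0 c with h | h
    · exact h
    · exfalso
      have hzero : ∀ k, co x₁ k = 0 := by
        intro k
        have := hleG x₁ k
        have := norm_nonneg (co x₁ k)
        have : ‖co x₁ k‖ = 0 := le_antisymm (by linarith [hleG x₁ k]) (norm_nonneg _)
        simpa using this
      have : x₁ = 0 := by
        apply Subtype.ext
        apply lp.ext
        funext k
        simpa using hzero k
      rw [this] at hx₁n
      simp at hx₁n
  -- the argmax sets
  set M : Set ↥W := {w : ↥W | ‖w‖ = 1 ∧ G w = c} with hM
  have hx₁M : x₁ ∈ M := ⟨hx₁n, rfl⟩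
  have hAfin : ∀ w : ↥W, {k : ℕ | c ≤ ‖co w k‖}.Finite := fun w =>
    finite_big_coords hq w.1 hcpos
  -- the norm as a tsum
  have hnorm_tsum : ∀ w : ↥W, ‖w‖ = 1 → ∑' k, ‖co w k‖ ^ q = 1 := by
    intro w hw
    have := lp.norm_rpow_eq_tsum hq w.1
    have hww : ‖w.1‖ = ‖w‖ := rfl
    rw [hww, hw, Real.one_rpow] at this
    exact this.symm
  have hsummable : ∀ w : ↥W, Summable fun k => ‖co w k‖ ^ q :=
    fun w => (memℓp_gen_iff hq).mp (lp.memℓp w.1)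
  -- cardinality bound for minimizers
  have hcard : ∀ w ∈ M, ((hAfin w).toFinset.card : ℝ) * c ^ q ≤ 1 := by
    intro w hw
    have h1 : ∀ k ∈ (hAfin w).toFinset, c ^ q ≤ ‖co w k‖ ^ q := by
      intro k hk
      have := (hAfin w).mem_toFinset.mp hk
      exact Real.rpow_le_rpow hcpos.le this hq.le
    calc ((hAfin w).toFinset.card : ℝ) * c ^ q
        = ∑ _k ∈ (hAfin w).toFinset, c ^ q := by rw [Finset.sum_const, nsmul_eq_mul]
      _ ≤ ∑ k ∈ (hAfin w).toFinset, ‖co w k‖ ^ q := Finset.sum_le_sum h1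
      _ ≤ ∑' k, ‖co w k‖ ^ q := Summable.sum_le_tsum _
          (fun k _ => Real.rpow_nonneg (norm_nonneg _) _) (hsummable w)
      _ = 1 := hnorm_tsum w hw.1
  have hcardbdd : BddAbove {m : ℕ | ∃ w ∈ M, (hAfin w).toFinset.card = m} := by
    refine ⟨Nat.floor (1 / c ^ q), ?_⟩
    rintro m ⟨w, hwM, rfl⟩
    apply Nat.le_floor
    have := hcard w hwM
    have hcq : (0:ℝ) < c ^ q := Real.rpow_pos_of_pos hcpos _
    rw [le_div_iff₀ hcq]
    exact this
  set a := sSup {m : ℕ | ∃ w ∈ M, (hAfin w).toFinset.card = m} with ha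
  have haMem : a ∈ {m : ℕ | ∃ w ∈ M, (hAfin w).toFinset.card = m} :=
    Nat.sSup_mem ⟨(hAfin x₁).toFinset.card, x₁, hx₁M, rfl⟩ hcardbdd
  have hmax : ∀ w ∈ M, (hAfin w).toFinset.card ≤ a := by
    intro w hw
    exact le_csSup hcardbdd ⟨w, hw, rfl⟩
  obtain ⟨x, hxM, hxa⟩ := haMem
  by_cases han : n ≤ a
  · -- conclusion case: many maximal coordinates
    have hcq : c ^ q ≤ 1 / n := by
      have h1 := hcard x hxM
      rw [hxa] at h1
      have h2 : (n : ℝ) * c ^ q ≤ (a : ℝ) * c ^ q := by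
        apply mul_le_mul_of_nonneg_right _ (Real.rpow_pos_of_pos hcpos _).le
        exact_mod_cast han
      have hn0 : (0:ℝ) < n := by exact_mod_cast hn
      rw [le_div_iff₀ hn0]
      nlinarith
    refine ⟨x.1, x.2, ?_, ?_⟩
    · exact hxM.1
    · intro k
      calc ‖(x.1 : ∀ _ : ℕ, ℝ) k‖ ^ q ≤ c ^ q :=
        Real.rpow_le_rpow (norm_nonneg _) (by rw [← hxM.2]; exact hleG x k) hq.le
        _ ≤ 1 / n := hcq
  · exfalso
    push_neg at han
    set Afin := (hAfin x).toFinset with hAfinDef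
    -- find a nonzero vector vanishing on Afin
    have hker : ∃ y : ↥W, y ≠ 0 ∧ ∀ k ∈ Afin, co y k = 0 := by
      by_contra hcon
      push_neg at hcon
      set φ : ↥W →ₗ[ℝ] (↥Afin → ℝ) :=
        { toFun := fun w i => co w i.1
          map_add' := by
            intro v w
            funext i
            show co (v + w) i.1 = co v i.1 + co w i.1
            simp only [hco]
            rw [Submodule.coe_add, lp.coeFn_add]
            simp
          map_smul' := by
            intro r w
            funext i
            show co (r • w) i.1 = r • co w i.1
            simp only [hco]
            rw [Submodule.coe_smul, lp.coeFn_smul]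
            simp } with hφ
      have hinj : Function.Injective φ := by
        rw [← LinearMap.ker_eq_bot]
        apply LinearMap.ker_eq_bot'.mpr
        intro w hw
        by_contra hw0
        obtain ⟨k, hk, hkne⟩ := hcon w hw0
        have : φ w ⟨k, hk⟩ = 0 := by rw [hw]; rfl
        exact hkne this
      have hle := LinearMap.finrank_le_finrank_of_injective hinj
      rw [hW] at hle
      have : Module.finrank ℝ (↥Afin → ℝ) = Afin.card := by
        rw [Module.finrank_pi ℝ, Fintype.card_coe]
      rw [this, hxa] at hle
      omega
    obtain ⟨y₀, hy₀0, hy₀A⟩ := hker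
    -- choose the sign so that the norm does not decrease in the positive direction
    have hside : ∃ y : ↥W, y ≠ 0 ∧ (∀ k ∈ Afin, co y k = 0) ∧
        ∀ t : ℝ, 0 ≤ t → 1 ≤ ‖x + t • y‖ := by
      have hconv : ∀ (y : ↥W) (t₁ t₂ : ℝ), 0 ≤ t₁ → 0 ≤ t₂ →
          ‖x + t₁ • y‖ < 1 → ‖x + t₂ • (-y)‖ < 1 → False := by
        intro y t₁ t₂ ht₁ ht₂ h1 h2
        have ht₁0 : t₁ ≠ 0 := by
          intro h; rw [h] at h1; simp [hxM.1] at h1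
        have ht₂0 : t₂ ≠ 0 := by
          intro h; rw [h] at h2; simp [hxM.1] at h2
        have ht₁p : 0 < t₁ := lt_of_le_of_ne ht₁ (Ne.symm ht₁0)
        have ht₂p : 0 < t₂ := lt_of_le_of_ne ht₂ (Ne.symm ht₂0)
        have hkey : (t₁ + t₂) • x = t₂ • (x + t₁ • y) + t₁ • (x + t₂ • (-y)) := by
          module
        have hnorm : (t₁ + t₂) * ‖x‖ ≤ t₂ * ‖x + t₁ • y‖ + t₁ * ‖x + t₂ • (-y)‖ := by
          calc (t₁ + t₂) * ‖x‖ = ‖(t₁ + t₂) • x‖ := by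
                rw [norm_smul, Real.norm_eq_abs, abs_of_pos (by linarith)]
            _ = ‖t₂ • (x + t₁ • y) + t₁ • (x + t₂ • (-y))‖ := by rw [hkey]
            _ ≤ ‖t₂ • (x + t₁ • y)‖ + ‖t₁ • (x + t₂ • (-y))‖ := norm_add_le _ _
            _ = t₂ * ‖x + t₁ • y‖ + t₁ * ‖x + t₂ • (-y)‖ := by
                rw [norm_smul, norm_smul, Real.norm_eq_abs, Real.norm_eq_abs,
                  abs_of_pos ht₂p, abs_of_pos ht₁p]
        rw [hxM.1, mul_one] at hnorm
        nlinarith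
      by_cases hpos : ∀ t : ℝ, 0 ≤ t → 1 ≤ ‖x + t • y₀‖
      · exact ⟨y₀, hy₀0, hy₀A, hpos⟩
      · push_neg at hpos
        obtain ⟨t₁, ht₁, h1⟩ := hpos
        refine ⟨-y₀, neg_ne_zero.mpr hy₀0, ?_, ?_⟩
        · intro k hk
          have := hy₀A k hk
          simp only [hco] at this ⊢
          rw [Submodule.coe_neg, lp.coeFn_neg]
          simp [this]
        · intro t ht
          by_contra hlt
          push_neg at hlt
          exact hconv y₀ t₁ t ht₁ ht h1 hlt
    clear hy₀0 hy₀A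
    obtain ⟨y, hy0, hyA, hside⟩ := hside
    have hynorm : 0 < ‖y‖ := norm_pos_iff.mpr hy0
    -- coordinates of x + t • y
    have hcoAdd : ∀ (t : ℝ) (w v : ↥W) (k : ℕ), co (w + t • v) k = co w k + t * co v k := by
      intro t w v k
      simp only [hco]
      rw [Submodule.coe_add, Submodule.coe_smul, lp.coeFn_add, lp.coeFn_smul]
      simp
    -- the set of admissible times
    set B : Set ℝ := Set.Ici (0:ℝ) ∩ ({t : ℝ | ‖x + t • y‖ ≤ 1} ∩
      ⋂ k : ℕ, {t : ℝ | k ∉ Afin → ‖co x k + t * co y k‖ ≤ c}) with hB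
    have hmemB : ∀ t : ℝ, t ∈ B ↔ (0 ≤ t ∧ ‖x + t • y‖ ≤ 1 ∧
        ∀ k, k ∉ Afin → ‖co x k + t * co y k‖ ≤ c) := by
      intro t
      simp only [hB, Set.mem_inter_iff, Set.mem_Ici, Set.mem_setOf_eq, Set.mem_iInter]
    have hBclosed : IsClosed B := by
      apply IsClosed.inter isClosed_Ici
      apply IsClosed.inter
      · exact isClosed_le ((continuous_const.add
          (continuous_id.smul continuous_const)).norm) continuous_const
      · apply isClosed_iInter
        intro k
        by_cases hk : k ∈ Afin
        · have : {t : ℝ | k ∉ Afin → ‖co x k + t * co y k‖ ≤ c} = Set.univ := by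
            ext t; simp [hk]
          rw [this]
          exact isClosed_univ
        · have : {t : ℝ | k ∉ Afin → ‖co x k + t * co y k‖ ≤ c}
              = {t : ℝ | ‖co x k + t * co y k‖ ≤ c} := by
            ext t; simp [hk]
          rw [this]
          exact isClosed_le ((continuous_const.add
            (continuous_id.mul continuous_const)).norm) continuous_const
    have hBbdd : BddAbove B := by
      refine ⟨2 / ‖y‖, ?_⟩
      intro t ht
      rw [hmemB] at ht
      obtain ⟨ht0, ht1, -⟩ := ht
      have h1 : t * ‖y‖ = ‖t • y‖ := by
        rw [norm_smul, Real.norm_eq_abs, abs_of_nonneg ht0]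
      have h2 : ‖t • y‖ ≤ ‖x + t • y‖ + ‖x‖ := by
        simpa [add_sub_cancel_left] using norm_sub_le (x + t • y) x
      rw [hxM.1] at h2
      rw [le_div_iff₀ hynorm]
      nlinarith
    have hB0 : (0:ℝ) ∈ B := by
      rw [hmemB]
      refine ⟨le_refl _, by simp [hxM.1], ?_⟩
      intro k hk
      have : ¬ c ≤ ‖co x k‖ := by
        intro hcle
        exact hk ((hAfin x).mem_toFinset.mpr hcle)
      push_neg at this
      simpa using this.le
    set T := sSup B with hT
    have hTB : T ∈ B := hBclosed.csSup_mem ⟨0, hB0⟩ hBbdd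
    rw [hmemB] at hTB
    obtain ⟨hT0, hTnorm, hTcoord⟩ := hTB
    set u := x + T • y with hu
    have hu1 : ‖u‖ = 1 := le_antisymm hTnorm (hside T hT0)
    have hxGc : ∀ k, ‖co x k‖ ≤ c := by
      intro k
      rw [← hxM.2]
      exact hleG x k
    have huS : G u = c := by
      apply le_antisymm
      · apply ciSup_le
        intro k
        by_cases hk : k ∈ Afin
        · have hck : co u k = co x k := by
            rw [hu, hcoAdd, hyA k hk, mul_zero, add_zero]
          rw [hck]
          exact hxGc k
        · have := hTcoord k hk
          have hck : co u k = co x k + T * co y k := by rw [hu, hcoAdd]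
          rw [hck]
          exact this
      · exact hmin u hu1
    have huM : u ∈ M := ⟨hu1, huS⟩
    have hsubset : Afin ⊆ (hAfin u).toFinset := by
      intro k hk
      apply (hAfin u).mem_toFinset.mpr
      have hck : co u k = co x k := by rw [hu, hcoAdd, hyA k hk, mul_zero, add_zero]
      have : c ≤ ‖co x k‖ := by
        have := (hAfin x).mem_toFinset.mp (hAfinDef ▸ hk)
        exact this
      rw [Set.mem_setOf_eq, hck]
      exact this
    have hAeq : (hAfin u).toFinset = Afin := by
      symm
      apply Finset.eq_of_subset_of_card_le hsubset
      rw [hxa]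
      exact hmax u huM
    have hustrict : ∀ k, k ∉ Afin → ‖co u k‖ < c := by
      intro k hk
      have h1 : k ∉ (hAfin u).toFinset := by rw [hAeq]; exact hk
      have h2 : ¬ c ≤ ‖co u k‖ := fun h => h1 ((hAfin u).mem_toFinset.mpr h)
      exact lt_of_not_ge h2
    obtain ⟨c'', hc''lt, hc''0, hc''⟩ := exists_uniform_coord_bound hq u.1 hcpos
    have hubound : ∀ k, k ∉ Afin → ‖co u k‖ ≤ c'' := fun k hk => hc'' k (hustrict k hk)
    set δ := (c - c'') / (2 * ‖y‖) with hδdef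
    have hδ : 0 < δ := div_pos (by linarith) (by linarith)
    set t := T + δ with htdef
    have htcoord : ∀ k, k ∉ Afin → ‖co x k + t * co y k‖ ≤ (c + c'') / 2 := by
      intro k hk
      have h1 : co x k + t * co y k = (co x k + T * co y k) + δ * co y k := by
        rw [htdef]; ring
      have h2 : ‖co u k‖ = ‖co x k + T * co y k‖ := by rw [hu, hcoAdd]
      have h3 : δ * ‖y‖ = (c - c'') / 2 := by
        rw [hδdef, div_mul_eq_mul_div, mul_div_mul_right _ _ hynorm.ne']
      calc ‖co x k + t * co y k‖ = ‖(co x k + T * co y k) + δ * co y k‖ := by rw [h1]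
        _ ≤ ‖co x k + T * co y k‖ + ‖δ * co y k‖ := norm_add_le _ _
        _ ≤ c'' + δ * ‖y‖ := by
            apply add_le_add
            · rw [← h2]; exact hubound k hk
            · rw [norm_mul, Real.norm_eq_abs, abs_of_pos hδ]
              exact mul_le_mul_of_nonneg_left (hconorm y k) hδ.le
        _ = (c + c'') / 2 := by rw [h3]; ring
    have htB : t ∉ B := by
      intro hmem
      have := le_csSup hBbdd hmem
      rw [htdef] at this
      have hTT : T ≤ T := le_refl _
      simp only [← hT] at this
      linarith
    have ht1 : 1 < ‖x + t • y‖ := by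
      by_contra hle
      push_neg at hle
      apply htB
      rw [hmemB]
      exact ⟨by linarith, hle, fun k hk => le_trans (htcoord k hk) (by linarith)⟩
    have hntpos : (0:ℝ) < ‖x + t • y‖ := by linarith
    have hxty0 : x + t • y ≠ 0 := by
      intro h
      rw [h] at ht1
      simp at ht1
      linarith
    set z := ‖x + t • y‖⁻¹ • (x + t • y) with hz
    have hznorm : ‖z‖ = 1 := norm_smul_inv_norm hxty0
    have hzco : ∀ k, ‖co z k‖ ≤ ‖x + t • y‖⁻¹ * c := by
      intro k
      have h1 : co z k = ‖x + t • y‖⁻¹ * co (x + t • y) k := by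
        simp only [hz, hco, Submodule.coe_smul, lp.coeFn_smul]
        simp
        rfl
      have h4 : ‖co (x + t • y) k‖ ≤ c := by
        by_cases hk : k ∈ Afin
        · have : co (x + t • y) k = co x k := by
            rw [hcoAdd, hyA k hk, mul_zero, add_zero]
          rw [this]
          exact hxGc k
        · rw [hcoAdd]
          exact (htcoord k hk).trans (by linarith)
      rw [h1, norm_mul, Real.norm_eq_abs, abs_of_pos (inv_pos.mpr hntpos)]
      exact mul_le_mul_of_nonneg_left h4 (inv_pos.mpr hntpos).le
    have hGz : G z < c := by
      have h2 : G z ≤ ‖x + t • y‖⁻¹ * c := ciSup_le hzco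
      have hrpos : 0 < ‖x + t • y‖⁻¹ := inv_pos.mpr hntpos
      have hident : ‖x + t • y‖ * ‖x + t • y‖⁻¹ = 1 := mul_inv_cancel₀ hntpos.ne'
      nlinarith
    exact absurd (hmin z hznorm) (not_le.mpr hGz)

/-- Lower bound: a norm-one vector supported on the first `n` coordinates has
`ℓ^{p₁}` norm at least `n^{1/q₁ - 1/q₀}`. -/
lemma lower_aux (p₀ p₁ : ℝ≥0∞) (hq₀ : 0 < p₀.toReal) (hp₀t : p₀ ≠ ∞) (hpq : p₀ < p₁)
    (n : ℕ) (hn : 1 ≤ n) (x : ℕ → ℝ) (hx0 : ∀ k, n ≤ k → x k = 0)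
    (hx1 : elp p₀ x = 1) :
    (n : ℝ≥0∞) ^ (1 / p₁.toReal - 1 / p₀.toReal) ≤ elp p₁ x := by
  set q₀ := p₀.toReal with hq₀def
  set a : ℕ → ℝ≥0∞ := fun k => (‖x k‖₊ : ℝ≥0∞) with ha
  have hn0 : (n : ℝ≥0∞) ≠ 0 := Nat.cast_ne_zero.mpr (by omega)
  have hnt : (n : ℝ≥0∞) ≠ ∞ := ENNReal.natCast_ne_top n
  have hzero : ∀ k, k ∉ Finset.range n → a k = 0 := by
    intro k hk
    have : x k = 0 := hx0 k (by simpa using hk)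
    simp [ha, this]
  have hsum : ∀ r : ℝ, 0 < r → ∑' k, a k ^ r = ∑ k ∈ Finset.range n, a k ^ r := by
    intro r hr
    apply tsum_eq_sum
    intro k hk
    rw [hzero k hk, ENNReal.zero_rpow_of_pos hr]
  have hS : ∑ k ∈ Finset.range n, a k ^ q₀ = 1 := by
    rw [elp_eq_of_ne_top hp₀t] at hx1
    have h2 := congrArg (fun z : ℝ≥0∞ => z ^ q₀) hx1
    simp only [← ENNReal.rpow_mul, one_div, inv_mul_cancel₀ hq₀.ne', ENNReal.rpow_one,
      ENNReal.one_rpow] at h2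
    have h3 : p₀.toReal⁻¹ * q₀ = 1 := inv_mul_cancel₀ hq₀.ne'
    rw [h3, ENNReal.rpow_one] at h2
    rw [← hsum q₀ hq₀]
    exact h2
  by_cases hp₁t : p₁ = ∞
  · subst hp₁t
    rw [elp_top]
    have hsup : ∀ k, a k ≤ ⨆ j, a j := fun k => le_iSup a k
    have h2 : (1 : ℝ≥0∞) ≤ n * (⨆ j, a j) ^ q₀ := by
      calc (1 : ℝ≥0∞) = ∑ k ∈ Finset.range n, a k ^ q₀ := hS.symm
        _ ≤ ∑ _k ∈ Finset.range n, (⨆ j, a j) ^ q₀ :=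
            Finset.sum_le_sum fun k _ => ENNReal.rpow_le_rpow (hsup k) hq₀.le
        _ = n * (⨆ j, a j) ^ q₀ := by
            rw [Finset.sum_const, Finset.card_range, nsmul_eq_mul]
    have h3 : (n : ℝ≥0∞)⁻¹ ≤ (⨆ j, a j) ^ q₀ := by
      calc (n : ℝ≥0∞)⁻¹ = (n : ℝ≥0∞)⁻¹ * 1 := (mul_one _).symm
        _ ≤ (n : ℝ≥0∞)⁻¹ * (n * (⨆ j, a j) ^ q₀) := mul_le_mul_right h2 _
        _ = (⨆ j, a j) ^ q₀ := by
            rw [← mul_assoc, ENNReal.inv_mul_cancel hn0 hnt, one_mul]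
    have h4 : ((n : ℝ≥0∞)⁻¹) ^ (1/q₀) ≤ ⨆ j, a j := by
      calc ((n : ℝ≥0∞)⁻¹) ^ (1/q₀) ≤ ((⨆ j, a j) ^ q₀) ^ (1/q₀) :=
            ENNReal.rpow_le_rpow h3 (by positivity)
        _ = ⨆ j, a j := by
            rw [← ENNReal.rpow_mul, mul_one_div, div_self hq₀.ne', ENNReal.rpow_one]
    calc (n : ℝ≥0∞) ^ (1 / (⊤ : ℝ≥0∞).toReal - 1 / q₀)
        = ((n : ℝ≥0∞)⁻¹) ^ (1/q₀) := by
          rw [ENNReal.inv_rpow, ← ENNReal.rpow_neg]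
          congr 1
          simp
      _ ≤ ⨆ j, a j := h4
  · -- finite p₁ : use Hölder (power mean)
    set q₁ := p₁.toReal with hq₁def
    have hq₁ : 0 < q₁ := ENNReal.toReal_pos (by
      intro h; rw [h] at hpq; exact (not_lt_of_ge zero_le) hpq) hp₁t
    have hq01 : q₀ < q₁ := ENNReal.toReal_strict_mono hp₁t hpq
    have hP : elp p₁ x = (∑ k ∈ Finset.range n, a k ^ q₁) ^ (1/q₁) := by
      rw [elp_eq_of_ne_top hp₁t, hsum q₁ hq₁]
    have hHolder := ENNReal.inner_le_weight_mul_Lp_of_nonneg (Finset.range n)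
      (p := q₁/q₀) (by rw [le_div_iff₀ hq₀]; linarith) (fun _ => 1) (fun k => a k ^ q₀)
    simp only [one_mul, Finset.sum_const, Finset.card_range, nsmul_eq_mul, mul_one] at hHolder
    have hpow : ∀ k, (a k ^ q₀) ^ (q₁/q₀) = a k ^ q₁ := by
      intro k
      rw [← ENNReal.rpow_mul]
      congr 1
      field_simp
    simp only [hpow] at hHolder
    rw [hS] at hHolder
    -- hHolder : 1 ≤ n ^ (1 - (q₁/q₀)⁻¹) * (∑ a^q₁) ^ (q₁/q₀)⁻¹
    have hinv : (q₁/q₀)⁻¹ = q₀/q₁ := by field_simp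
    rw [hinv] at hHolder
    set Ssum := ∑ k ∈ Finset.range n, a k ^ q₁ with hSsum
    have h5 : (n : ℝ≥0∞) ^ (q₀/q₁ - 1) ≤ Ssum ^ (q₀/q₁) := by
      calc (n : ℝ≥0∞) ^ (q₀/q₁ - 1) = (n : ℝ≥0∞) ^ (q₀/q₁ - 1) * 1 := (mul_one _).symm
        _ ≤ (n : ℝ≥0∞) ^ (q₀/q₁ - 1) * ((n:ℝ≥0∞) ^ (1 - q₀/q₁) * Ssum ^ (q₀/q₁)) :=
            mul_le_mul_right hHolder _
        _ = ((n : ℝ≥0∞) ^ (q₀/q₁ - 1) * (n:ℝ≥0∞) ^ (1 - q₀/q₁)) * Ssum ^ (q₀/q₁) := by ring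
        _ = Ssum ^ (q₀/q₁) := by
            rw [← ENNReal.rpow_add _ _ hn0 hnt]
            norm_num
    have h6 : ((n : ℝ≥0∞) ^ (q₀/q₁ - 1)) ^ (1/q₀) ≤ (Ssum ^ (q₀/q₁)) ^ (1/q₀) :=
      ENNReal.rpow_le_rpow h5 (by positivity)
    rw [← ENNReal.rpow_mul, ← ENNReal.rpow_mul] at h6
    have he1 : (q₀/q₁ - 1) * (1/q₀) = 1/q₁ - 1/q₀ := by field_simp
    have he2 : q₀/q₁ * (1/q₀) = 1/q₁ := by field_simp
    rw [he1, he2] at h6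
    rw [hP]
    exact h6

/-- Upper bound computation from a unit vector with uniformly small coordinates. -/
lemma upper_aux (p₀ p₁ : ℝ≥0∞) (hq₀ : 0 < p₀.toReal) (hp₀t : p₀ ≠ ∞) (hpq : p₀ < p₁)
    (n : ℕ) (hn : 1 ≤ n) (y : ℕ → ℝ)
    (hsum1 : ∑' k, (‖y k‖₊ : ℝ≥0∞) ^ p₀.toReal = 1)
    (hyk : ∀ k, ((‖y k‖₊ : ℝ≥0∞)) ^ p₀.toReal ≤ ((n : ℝ≥0∞))⁻¹) :
    elp p₁ y ≤ (n : ℝ≥0∞) ^ (1 / p₁.toReal - 1 / p₀.toReal) := by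
  set q₀ := p₀.toReal with hq₀def
  set a : ℕ → ℝ≥0∞ := fun k => (‖y k‖₊ : ℝ≥0∞) with ha
  have hn0 : (n : ℝ≥0∞) ≠ 0 := Nat.cast_ne_zero.mpr (by omega)
  have hnt : (n : ℝ≥0∞) ≠ ∞ := ENNReal.natCast_ne_top n
  by_cases hp₁t : p₁ = ∞
  · subst hp₁t
    rw [elp_top]
    have h4 : ∀ k, a k ≤ ((n : ℝ≥0∞)⁻¹) ^ (1/q₀) := by
      intro k
      calc a k = (a k ^ q₀) ^ (1/q₀) := by
            rw [← ENNReal.rpow_mul, mul_one_div, div_self hq₀.ne', ENNReal.rpow_one]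
        _ ≤ ((n : ℝ≥0∞)⁻¹) ^ (1/q₀) := ENNReal.rpow_le_rpow (hyk k) (by positivity)
    calc ⨆ k, a k ≤ ((n : ℝ≥0∞)⁻¹) ^ (1/q₀) := iSup_le h4
      _ = (n : ℝ≥0∞) ^ (1 / (⊤:ℝ≥0∞).toReal - 1/q₀) := by
          rw [ENNReal.inv_rpow, ← ENNReal.rpow_neg]
          congr 1
          simp
  · set q₁ := p₁.toReal with hq₁def
    have hq₁ : 0 < q₁ := ENNReal.toReal_pos (by
      intro h; rw [h] at hpq; exact (not_lt_of_ge zero_le) hpq) hp₁t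
    have hq01 : q₀ < q₁ := ENNReal.toReal_strict_mono hp₁t hpq
    have hterm : ∀ k, a k ^ q₁ ≤ ((n : ℝ≥0∞)⁻¹) ^ ((q₁ - q₀)/q₀) * a k ^ q₀ := by
      intro k
      by_cases ha0 : a k = 0
      · rw [ha0, ENNReal.zero_rpow_of_pos hq₁]
        exact zero_le
      · have hat : a k ≠ ∞ := ENNReal.coe_ne_top
        have h1 : a k ^ q₁ = a k ^ (q₁ - q₀) * a k ^ q₀ := by
          rw [← ENNReal.rpow_add _ _ ha0 hat, sub_add_cancel]
        rw [h1]
        apply mul_le_mul_left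
        calc a k ^ (q₁ - q₀) = (a k ^ q₀) ^ ((q₁ - q₀)/q₀) := by
              rw [← ENNReal.rpow_mul]
              congr 1
              field_simp
          _ ≤ ((n : ℝ≥0∞)⁻¹) ^ ((q₁ - q₀)/q₀) :=
              ENNReal.rpow_le_rpow (hyk k) (div_nonneg (by linarith) hq₀.le)
    have htsum : ∑' k, a k ^ q₁ ≤ ((n : ℝ≥0∞)⁻¹) ^ ((q₁ - q₀)/q₀) := by
      calc ∑' k, a k ^ q₁ ≤ ∑' k, ((n : ℝ≥0∞)⁻¹) ^ ((q₁ - q₀)/q₀) * a k ^ q₀ :=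
            ENNReal.tsum_le_tsum hterm
        _ = ((n : ℝ≥0∞)⁻¹) ^ ((q₁ - q₀)/q₀) * ∑' k, a k ^ q₀ := ENNReal.tsum_mul_left
        _ = ((n : ℝ≥0∞)⁻¹) ^ ((q₁ - q₀)/q₀) := by rw [hsum1, mul_one]
    rw [elp_eq_of_ne_top hp₁t]
    calc (∑' k, a k ^ q₁) ^ (1/q₁)
        ≤ (((n : ℝ≥0∞)⁻¹) ^ ((q₁ - q₀)/q₀)) ^ (1/q₁) :=
          ENNReal.rpow_le_rpow htsum (by positivity)
      _ = (n : ℝ≥0∞) ^ (1/q₁ - 1/q₀) := by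
          rw [ENNReal.inv_rpow, ← ENNReal.rpow_neg, ← ENNReal.rpow_mul]
          congr 1
          field_simp
          try ring
          try tauto

lemma bern_upper (p₀ p₁ : ℝ≥0∞) (hp₀ : 1 ≤ p₀) (hp : p₀ < p₁) (n : ℕ) (hn : 1 ≤ n) :
    bern (elp p₀ (ι := ℕ)) (elp p₁ (ι := ℕ)) n ≤
      (n : ℝ≥0∞) ^ (1 / p₁.toReal - 1 / p₀.toReal) := by
  haveI : Fact (1 ≤ p₀) := ⟨hp₀⟩
  have hp₀t : p₀ ≠ ∞ := (hp.trans_le le_top).ne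
  have hp₀0 : p₀ ≠ 0 := by intro h; rw [h] at hp₀; simp at hp₀
  have hq₀ : 0 < p₀.toReal := ENNReal.toReal_pos hp₀0 hp₀t
  apply iSup_le
  rintro ⟨V, hrank, hfin⟩
  -- the corresponding submodule of lp
  set W : Submodule ℝ (lp (fun _ : ℕ => ℝ) p₀) :=
    { carrier := {f | ⇑f ∈ V}
      zero_mem' := by simp only [Set.mem_setOf_eq, lp.coeFn_zero]; exact V.zero_mem
      add_mem' := by
        intro f g hf hg
        simp only [Set.mem_setOf_eq, lp.coeFn_add] at *
        exact V.add_mem hf hg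
      smul_mem' := by
        intro r f hf
        simp only [Set.mem_setOf_eq, lp.coeFn_smul] at *
        exact V.smul_mem r hf } with hW
  have hWrank : Module.finrank ℝ W = n := by
    have e : ↥W ≃ₗ[ℝ] ↥V :=
      { toFun := fun w => ⟨⇑w.1, w.2⟩
        map_add' := by intro w v; apply Subtype.ext; simp [lp.coeFn_add]; rfl
        map_smul' := by intro r w; apply Subtype.ext; simp [lp.coeFn_smul]
        invFun := fun v => ⟨⟨v.1, memℓp_of_elp_ne_top hp₀t hq₀ (hfin v.1 v.2)⟩, v.2⟩
        left_inv := by intro w; apply Subtype.ext; apply lp.ext; rfl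
        right_inv := by intro v; apply Subtype.ext; rfl }
    rw [e.finrank_eq]
    exact hrank
  obtain ⟨f, hfW, hf1, hfk⟩ := exists_unit_vector_small_coords p₀ hp₀t n hn W hWrank
  have hsummable : Summable fun k => ‖(f : ∀ _ : ℕ, ℝ) k‖ ^ p₀.toReal :=
    (memℓp_gen_iff hq₀).mp (lp.memℓp f)
  have hsum1 : ∑' k, (‖(f : ∀ _ : ℕ, ℝ) k‖₊ : ℝ≥0∞) ^ p₀.toReal = 1 := by
    rw [tsum_coe_rpow_eq _ hq₀.le hsummable, ← lp.norm_rpow_eq_tsum hq₀ f, hf1,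
      Real.one_rpow, ENNReal.ofReal_one]
  have help1 : elp p₀ ⇑f = 1 := by
    rw [elp_eq_ofReal_norm hp₀t hq₀ f, hf1, ENNReal.ofReal_one]
  have hyk : ∀ k, ((‖(f : ∀ _ : ℕ, ℝ) k‖₊ : ℝ≥0∞)) ^ p₀.toReal ≤ ((n : ℝ≥0∞))⁻¹ := by
    intro k
    have h1 : ((‖(f : ∀ _ : ℕ, ℝ) k‖₊ : ℝ≥0∞)) ^ p₀.toReal
        = ENNReal.ofReal (‖(f : ∀ _ : ℕ, ℝ) k‖ ^ p₀.toReal) := by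
      rw [← ENNReal.ofReal_rpow_of_nonneg (norm_nonneg _) hq₀.le, ← coe_nnnorm, ENNReal.ofReal_coe_nnreal]
    rw [h1]
    calc ENNReal.ofReal (‖(f : ∀ _ : ℕ, ℝ) k‖ ^ p₀.toReal)
        ≤ ENNReal.ofReal (1 / n) := ENNReal.ofReal_le_ofReal (hfk k)
      _ = ((n : ℝ≥0∞))⁻¹ := by
          rw [one_div, ENNReal.ofReal_inv_of_pos (by positivity), ENNReal.ofReal_natCast]
  exact iInf_le_of_le ⟨⇑f, hfW, help1⟩ (upper_aux p₀ p₁ hq₀ hp₀t hp n hn _ hsum1 hyk)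

lemma bern_lower (p₀ p₁ : ℝ≥0∞) (hp₀ : 1 ≤ p₀) (hp : p₀ < p₁) (n : ℕ) (hn : 1 ≤ n) :
    (n : ℝ≥0∞) ^ (1 / p₁.toReal - 1 / p₀.toReal) ≤
      bern (elp p₀ (ι := ℕ)) (elp p₁ (ι := ℕ)) n := by
  classical
  have hp₀t : p₀ ≠ ∞ := (hp.trans_le le_top).ne
  have hp₀0 : p₀ ≠ 0 := by intro h; rw [h] at hp₀; simp at hp₀
  have hq₀ : 0 < p₀.toReal := ENNReal.toReal_pos hp₀0 hp₀t
  set Vn : Submodule ℝ (ℕ → ℝ) :=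
    { carrier := {x | ∀ k, n ≤ k → x k = 0}
      zero_mem' := by intro k _; rfl
      add_mem' := by
        intro f g hf hg k hk
        show f k + g k = 0
        rw [hf k hk, hg k hk, add_zero]
      smul_mem' := by
        intro r f hf k hk
        show r * f k = 0
        rw [hf k hk, mul_zero] } with hVn
  have hVmem : ∀ x : ℕ → ℝ, x ∈ Vn ↔ ∀ k, n ≤ k → x k = 0 := fun x => Iff.rfl
  have hVrank : Module.finrank ℝ Vn = n := by
    have e : ↥Vn ≃ₗ[ℝ] (Fin n → ℝ) :=
      { toFun := fun x i => x.1 i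
        map_add' := by intro x y; rfl
        map_smul' := by intro r x; rfl
        invFun := fun y =>
          ⟨fun k => if h : k < n then y ⟨k, h⟩ else 0, by
            intro k hk
            exact dif_neg (by omega)⟩
        left_inv := by
          intro x
          apply Subtype.ext
          funext k
          show (if h : k < n then x.1 k else 0) = x.1 k
          by_cases h : k < n
          · exact dif_pos h
          · rw [dif_neg h]
            exact (x.2 k (by omega)).symm
        right_inv := by
          intro y
          funext i
          simp }
    rw [e.finrank_eq, Module.finrank_fin_fun]
  have htsumfin : ∀ (x : ℕ → ℝ), x ∈ Vn → ∀ r : ℝ, 0 < r →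
      ∑' k, (‖x k‖₊ : ℝ≥0∞) ^ r = ∑ k ∈ Finset.range n, (‖x k‖₊ : ℝ≥0∞) ^ r := by
    intro x hx r hr
    apply tsum_eq_sum
    intro k hk
    have : x k = 0 := hx k (by simpa using hk)
    simp [this, ENNReal.zero_rpow_of_pos hr]
  have hVfin : ∀ x ∈ Vn, elp p₀ x ≠ ∞ := by
    intro x hx
    rw [elp_eq_of_ne_top hp₀t, htsumfin x hx _ hq₀]
    apply ENNReal.rpow_ne_top_of_nonneg (by positivity)
    apply (ENNReal.sum_lt_top.mpr ?_).ne
    intro k _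
    exact ENNReal.rpow_lt_top_of_nonneg hq₀.le ENNReal.coe_ne_top
  refine le_iSup_of_le ⟨Vn, hVrank, hVfin⟩ (le_iInf ?_)
  rintro ⟨x, hxV, hx1⟩
  exact lower_aux p₀ p₁ hq₀ hp₀t hp n hn x hxV hx1

theorem bernstein_lp_inclusion (p₀ p₁ : ℝ≥0∞) (hp₀ : 1 ≤ p₀) (hp : p₀ < p₁) :
    (∀ n : ℕ, 1 ≤ n →
      bern (elp p₀ (ι := ℕ)) (elp p₁ (ι := ℕ)) n =
        (n : ℝ≥0∞) ^ (1 / p₁.toReal - 1 / p₀.toReal)) ∧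
    Tendsto (bern (elp p₀ (ι := ℕ)) (elp p₁ (ι := ℕ))) atTop (nhds 0) := by
  have hval : ∀ n : ℕ, 1 ≤ n →
      bern (elp p₀ (ι := ℕ)) (elp p₁ (ι := ℕ)) n =
        (n : ℝ≥0∞) ^ (1 / p₁.toReal - 1 / p₀.toReal) :=
    fun n hn => le_antisymm (bern_upper p₀ p₁ hp₀ hp n hn) (bern_lower p₀ p₁ hp₀ hp n hn)
  refine ⟨hval, ?_⟩
  have hp₀t : p₀ ≠ ∞ := (hp.trans_le le_top).ne
  have hp₀0 : p₀ ≠ 0 := by intro h; rw [h] at hp₀; simp at hp₀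
  have hq₀ : 0 < p₀.toReal := ENNReal.toReal_pos hp₀0 hp₀t
  set β := 1 / p₁.toReal - 1 / p₀.toReal with hβdef
  have hβ : β < 0 := by
    rw [hβdef]
    by_cases hp₁t : p₁ = ∞
    · subst hp₁t
      simp only [ENNReal.toReal_top, _root_.div_zero]
      have : 0 < 1 / p₀.toReal := by positivity
      linarith
    · have hq₁ : 0 < p₁.toReal := ENNReal.toReal_pos (by
        intro h; rw [h] at hp; exact (not_lt_of_ge zero_le) hp) hp₁t
      have hq01 : p₀.toReal < p₁.toReal := ENNReal.toReal_strict_mono hp₁t hp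
      have := one_div_lt_one_div_of_lt hq₀ hq01
      linarith
  have htend : Tendsto (fun n : ℕ => (n : ℝ≥0∞) ^ β) atTop (nhds 0) := by
    have hc : Tendsto (fun z : ℝ≥0∞ => z ^ β) (nhds ⊤) (nhds 0) := by
      have := (ENNReal.continuous_rpow_const (y := β)).tendsto ⊤
      rwa [ENNReal.top_rpow_of_neg hβ] at this
    exact hc.comp ENNReal.tendsto_nat_nhds_top
  apply htend.congr'
  filter_upwards [eventually_ge_atTop 1] with n hn
  exact (hval n hn).symm
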